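/- Every solution of the third-order equation y_{n+3} = max{y_{n+2}, y_{n+1}, 0} - y_n with real initial conditions is periodic of period 8 (not necessarily minimal). -/
import Mathlib

set_option maxHeartbeats 2000000 in
lemma key_max8 (a b c d e f g h i : ℝ)
    (hd : d = max (max c b) 0 - a)
    (he : e = max (max d c) 0 - b)
    (hf : f = max (max e d) 0 - c)
    (hg : g = max (max f e) 0 - d)
    (hh : h = max (max g f) 0 - e)
    (hi : i = max (max h g) 0 - f) : i = a := by
  simp only [max_def] at hd he hf hg hh hi
  split_ifs at hd <;>
  (split_ifs at he <;> try linarith) <;>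
  (split_ifs at hf <;> try linarith) <;>
  (split_ifs at hg <;> try linarith) <;>
  (split_ifs at hh <;> try linarith) <;>
  (split_ifs at hi <;> linarith)

theorem stmt_3 (y : ℕ → ℝ)
    (hrec : ∀ n ≥ 1, y (n + 3) = max (max (y (n + 2)) (y (n + 1))) 0 - y n) :
    ∀ n ≥ 1, y (n + 8) = y n := by
  intro n hn
  exact key_max8 (y n) (y (n+1)) (y (n+2)) (y (n+3)) (y (n+4)) (y (n+5)) (y (n+6))
    (y (n+7)) (y (n+8)) (hrec n hn) (hrec (n+1) (by omega)) (hrec (n+2) (by omega))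
    (hrec (n+3) (by omega)) (hrec (n+4) (by omega)) (hrec (n+5) (by omega))
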